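/- Let X be a countably infinite set and let E be any set function on finite subsets of X. If the lexicographic composition L_E preserves path independence over the class C^res of responsive choice functions, then R_E is K-disjoint on Dom(R_E): for every Z ∈ Dom(R_E), R_E(Z) ∩ E(∅) = ∅. -/

import Mathlib

/-! Common definitions: choice functions on a countably infinite set of items,
lexicographic composition subject to an exclusion function, and the various
properties from the paper. Items form a type `X`; finite subsets of `X` are
`Finset X`; set functions are maps `Finset X → Set X`. -/

open scoped Classical

variable {X : Type*}

/-- A choice function selects a subset of its input. -/
def IsChoice (C : Finset X → Finset X) : Prop := ∀ Y, C Y ⊆ Y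

/-- Lexicographic composition of `C1` and `C2` subject to the exclusion
function `E`:  `Y ↦ C1(Y) ∪ C2(Y \ E(C1(Y)))`. -/
noncomputable def lexComp (E : Finset X → Set X) (C1 C2 : Finset X → Finset X) :
    Finset X → Finset X :=
  fun Y => C1 Y ∪ C2 (Y.filter (fun y => y ∉ E (C1 Y)))

/-- Path independence: `C(Y ∪ Y') = C(C(Y) ∪ C(Y'))`. -/
def PathIndependent (C : Finset X → Finset X) : Prop :=
  ∀ Y Y' : Finset X, C (Y ∪ Y') = C (C Y ∪ C Y')

/-- Substitutes: the rejection function is monotone. -/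
def Substitutes (C : Finset X → Finset X) : Prop :=
  ∀ Y Y' : Finset X, Y ⊆ Y' → Y \ C Y ⊆ Y' \ C Y'

/-- Size monotonicity (law of aggregate demand). -/
def SizeMonotonic (C : Finset X → Finset X) : Prop :=
  ∀ Y Y' : Finset X, Y ⊆ Y' → (C Y).card ≤ (C Y').card

/-- Consistency: `C(Y') ⊆ Y ⊆ Y'` implies `C(Y) = C(Y')`. -/
def Consistent (C : Finset X → Finset X) : Prop :=
  ∀ Y Y' : Finset X, C Y' ⊆ Y → Y ⊆ Y' → C Y = C Y'

/-- The `q` highest-ranked acceptable elements of `Y`, with respect to a linear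
order `r` on `X ∪ {∅}` (modelled as `Option X`, `none` playing the role of the
outside option `∅`): `y` is chosen iff `y ≻ ∅` and fewer than `q` acceptable
elements of `Y` are ranked strictly above `y`. -/
noncomputable def topChoice (r : LinearOrder (Option X)) (q : ℕ) (Y : Finset X) : Finset X :=
  Y.filter (fun y => r.lt none (some y) ∧
    (Y.filter (fun z => r.lt none (some z) ∧ r.lt (some y) (some z))).card < q)

/-- `C` is responsive to the linear order `r` on `X ∪ {∅}` and quota `q`. -/
def ResponsiveWith (r : LinearOrder (Option X)) (q : ℕ) (C : Finset X → Finset X) : Prop :=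
  ∀ Y : Finset X, C Y = topChoice r q Y

/-- Responsive choice functions (the class `C^res`). -/
def Responsive (C : Finset X → Finset X) : Prop :=
  ∃ (r : LinearOrder (Option X)) (q : ℕ), ResponsiveWith r q C

/-- Single-valued responsive choice functions (the class `C^{sv-res}`): quota 1. -/
def SVResponsive (C : Finset X → Finset X) : Prop :=
  ∃ r : LinearOrder (Option X), ResponsiveWith r 1 C

/-- `E` is threshold-linear with cardinal reuse with respect to the parameters
`t ∈ ℕ ∪ {0,∞}`, `K ⊆ X` and the chain `∅ = T^0 ⊆ T^1 ⊆ ⋯ ⊆ T^t ⊆ X \ K`: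
for every finite `Z`, if `|Z| < t` then `E(Z) = (Z \ T^{|Z|}) ∪ K`, and
otherwise `G_E(Z) = E(Z) ∪ Z = X`. -/
def TLCRWith (E : Finset X → Set X) (t : ℕ∞) (K : Set X) (T : ℕ → Set X) : Prop :=
  T 0 = ∅ ∧ (∀ n : ℕ, (n : ℕ∞) < t → T n ⊆ T (n + 1)) ∧
  (∀ n : ℕ, (n : ℕ∞) ≤ t → T n ⊆ Kᶜ) ∧
  ∀ Z : Finset X,
    ((Z.card : ℕ∞) < t → E Z = ((Z : Set X) \ T Z.card) ∪ K) ∧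
    (¬ (Z.card : ℕ∞) < t → E Z ∪ (Z : Set X) = Set.univ)

/-- `E` is threshold-linear with cardinal reuse (for some parameters). -/
def TLCR (E : Finset X → Set X) : Prop :=
  ∃ (t : ℕ∞) (K : Set X) (T : ℕ → Set X), TLCRWith E t K T

/-- A dilation `D` is threshold-linear (with threshold `t`), where `K = D(∅)`:
`D(Z) = Z ∪ K` when `|Z| < t`, and `D(Z) = X` otherwise. -/
def ThresholdLinear (D : Finset X → Set X) : Prop :=
  ∃ t : ℕ∞, ∀ Z : Finset X,
    ((Z.card : ℕ∞) < t → D Z = (Z : Set X) ∪ D ∅) ∧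
    (¬ (Z.card : ℕ∞) < t → D Z = Set.univ)

/-- A set function `F` (valued inside its argument) is cardinal-linear:
there is a weakly increasing sequence `∅ = T^0 ⊆ T^1 ⊆ ⋯` with
`F(Z) = Z ∩ T^{|Z|}` for every finite `Z`. -/
def CardinalLinear (F : Finset X → Set X) : Prop :=
  ∃ T : ℕ → Set X, T 0 = ∅ ∧ Monotone T ∧
    ∀ Z : Finset X, F Z = (Z : Set X) ∩ T Z.card

section Equiv

variable (s : Setoid X)

/-- A finite set is feasible if it contains at most one element of each
equivalence class. -/
def Feasible (Z : Finset X) : Prop :=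
  ∀ x ∈ Z, ∀ z ∈ Z, x ≠ z → ¬ s.r x z

/-- A choice function is many-to-one if it always selects a feasible set. -/
def ManyToOne (C : Finset X → Finset X) : Prop :=
  ∀ Y : Finset X, Feasible s (C Y)

/-- `I_Z`: the union of the equivalence classes of the members of `Z`. -/
def IClass (Z : Finset X) : Set X := {y | ∃ x ∈ Z, s.r y x}

/-- `E` is equivalence-excluding: `Z ∪ E(Z) ⊇ I_Z` for every feasible `Z`. -/
def EquivExcluding (E : Finset X → Set X) : Prop :=
  ∀ Z : Finset X, Feasible s Z → IClass s Z ⊆ (Z : Set X) ∪ E Z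

/-- `Cbar` completes `C`: whenever `Cbar(Y)` is feasible, `Cbar(Y) = C(Y)`. -/
def Completes (Cbar C : Finset X → Finset X) : Prop :=
  ∀ Y : Finset X, Feasible s (Cbar Y) → Cbar Y = C Y

/-- `E` is many-to-one threshold-linear with cardinal reuse with the parameters
`t`, `K`, `{T^n}`: the displayed condition holds for every *feasible* `Z`:
if `Z ∪ K ≠ X` and `|Z| < t` then `E(Z) = (Z \ T^{|Z|}) ∪ K`, and otherwise
`G_E(Z) = X`. -/
def MtoTLCRWith (E : Finset X → Set X) (t : ℕ∞) (K : Set X) (T : ℕ → Set X) : Prop :=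
  T 0 = ∅ ∧ (∀ n : ℕ, (n : ℕ∞) < t → T n ⊆ T (n + 1)) ∧
  (∀ n : ℕ, (n : ℕ∞) ≤ t → T n ⊆ Kᶜ) ∧
  ∀ Z : Finset X, Feasible s Z →
    (((Z : Set X) ∪ K ≠ Set.univ ∧ (Z.card : ℕ∞) < t) →
      E Z = ((Z : Set X) \ T Z.card) ∪ K) ∧
    (¬ ((Z : Set X) ∪ K ≠ Set.univ ∧ (Z.card : ℕ∞) < t) →
      E Z ∪ (Z : Set X) = Set.univ)

end Equiv

/-! ### Auxiliary machinery for the proof -/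

section PKDHelpers

open Finset

variable {X : Type*}

private noncomputable def pkdG (f : X → ℕ) (rk : X → ℕ) : Option X → ℕ ×ₗ ℕ :=
  fun o => toLex (o.elim 1 rk, o.elim 0 fun a => f a + 1)

private theorem pkdG_inj (f : X → ℕ) (hf : Function.Injective f) (rk : X → ℕ) :
    Function.Injective (pkdG f rk) := by
  intro a b h
  have h2 : (ofLex (pkdG f rk a)).2 = (ofLex (pkdG f rk b)).2 := by rw [h]
  match a, b with
  | none, none => rfl
  | none, some b => simp [pkdG] at h2
  | some a, none => simp [pkdG] at h2
  | some a, some b =>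
    simp only [pkdG, Option.elim, ofLex_toLex, add_left_inj] at h2
    exact congrArg some (hf h2)

private noncomputable def pkdOrd (f : X → ℕ) (hf : Function.Injective f) (rk : X → ℕ) :
    LinearOrder (Option X) :=
  LinearOrder.lift' (pkdG f rk) (pkdG_inj f hf rk)

private theorem pkd_lt (f : X → ℕ) (hf : Function.Injective f) (rk : X → ℕ) (a b : Option X) :
    (pkdOrd f hf rk).lt a b ↔ pkdG f rk a < pkdG f rk b := Iff.rfl

private theorem pkd_lt_none (f : X → ℕ) (hf : Function.Injective f) (rk : X → ℕ) (y : X) :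
    (pkdOrd f hf rk).lt none (some y) ↔ 1 ≤ rk y := by
  rw [pkd_lt]
  show toLex ((1 : ℕ), (0 : ℕ)) < toLex (rk y, f y + 1) ↔ _
  rw [Prod.Lex.lt_iff]
  simp only [ofLex_toLex]
  omega

private theorem pkd_lt_some (f : X → ℕ) (hf : Function.Injective f) (rk : X → ℕ) (y z : X) :
    (pkdOrd f hf rk).lt (some y) (some z) ↔
      (rk y < rk z ∨ (rk y = rk z ∧ f y < f z)) := by
  rw [pkd_lt]
  show toLex (rk y, f y + 1) < toLex (rk z, f z + 1) ↔ _
  rw [Prod.Lex.lt_iff]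
  simp only [ofLex_toLex]
  omega

private theorem pkd_mem_topChoice (f : X → ℕ) (hf : Function.Injective f) (rk : X → ℕ)
    (q : ℕ) (Y : Finset X) (y : X) :
    y ∈ topChoice (pkdOrd f hf rk) q Y ↔
      y ∈ Y ∧ 1 ≤ rk y ∧
        (Y.filter fun z => 1 ≤ rk z ∧ (rk y < rk z ∨ (rk y = rk z ∧ f y < f z))).card < q := by
  have hfil :
      (Y.filter fun z => (pkdOrd f hf rk).lt none (some z) ∧
          (pkdOrd f hf rk).lt (some y) (some z))
        = Y.filter fun z => 1 ≤ rk z ∧ (rk y < rk z ∨ (rk y = rk z ∧ f y < f z)) := by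
    apply Finset.filter_congr
    intro z _
    rw [pkd_lt_none, pkd_lt_some]
  unfold topChoice
  rw [Finset.mem_filter, hfil, pkd_lt_none]

private theorem isChoice_topChoice (r : LinearOrder (Option X)) (q : ℕ) :
    IsChoice (fun Y : Finset X => topChoice r q Y) := by
  intro Y
  unfold topChoice
  exact Finset.filter_subset _ _

/-- Evaluation of the "trace" responsive choice: all of `T` acceptable (tied rank),
quota `|T|`; it chooses `Y ∩ T`. -/
private theorem pkd_trace (f : X → ℕ) (hf : Function.Injective f) (T : Finset X)
    (Y : Finset X) :
    topChoice (pkdOrd f hf (fun y => if y ∈ T then 1 else 0)) T.card Y = Y ∩ T := by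
  ext y
  rw [pkd_mem_topChoice, Finset.mem_inter]
  constructor
  · rintro ⟨hY, hacc, -⟩
    refine ⟨hY, ?_⟩
    by_contra h
    simp [h] at hacc
  · rintro ⟨hY, hT⟩
    refine ⟨hY, by simp [hT], ?_⟩
    refine lt_of_le_of_lt (Finset.card_le_card fun z hz => ?_) (Finset.card_erase_lt_of_mem hT)
    rw [Finset.mem_filter] at hz
    obtain ⟨hzY, hz1, hlt⟩ := hz
    by_cases hzT : z ∈ T
    · rw [Finset.mem_erase]
      refine ⟨?_, hzT⟩
      rcases hlt with h | ⟨-, hf'⟩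
      · simp [hT, hzT] at h
      · rintro rfl
        exact lt_irrefl _ hf'
    · simp [hzT] at hz1

/-- Evaluation of the "block + single" responsive choice: `T` on top (tied),
then `s`, quota `|T|`. -/
private theorem pkd_block (f : X → ℕ) (hf : Function.Injective f) (T : Finset X) (s : X)
    (hs : s ∉ T) (Y : Finset X) :
    topChoice (pkdOrd f hf (fun y => if y ∈ T then 2 else if y = s then 1 else 0)) T.card Y =
      (Y ∩ T) ∪ (if s ∈ Y ∧ ¬ T ⊆ Y then {s} else ∅) := by
  ext y
  rw [pkd_mem_topChoice, Finset.mem_union, Finset.mem_inter]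
  by_cases hyT : y ∈ T
  · have hcard : y ∈ Y →
        (Y.filter fun z => 1 ≤ (if z ∈ T then 2 else if z = s then 1 else 0) ∧
          ((if y ∈ T then 2 else if y = s then 1 else 0) <
              (if z ∈ T then 2 else if z = s then 1 else 0) ∨
            ((if y ∈ T then (2:ℕ) else if y = s then 1 else 0) =
              (if z ∈ T then 2 else if z = s then 1 else 0) ∧ f y < f z))).card < T.card := by
      intro hY
      refine lt_of_le_of_lt (Finset.card_le_card fun z hz => ?_)
        (Finset.card_erase_lt_of_mem hyT)
      rw [Finset.mem_filter] at hz
      obtain ⟨hzY, hz1, hlt⟩ := hz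
      by_cases hzT : z ∈ T
      · rw [Finset.mem_erase]
        refine ⟨?_, hzT⟩
        rcases hlt with h | ⟨-, hf'⟩
        · simp [hyT, hzT] at h
        · rintro rfl
          exact lt_irrefl _ hf'
      · exfalso
        by_cases hzs : z = s
        · rcases hlt with h | ⟨he, -⟩
          · simp [hyT, hzT, hzs, hs] at h
          · simp [hyT, hzT, hzs, hs] at he
        · simp [hzT, hzs] at hz1
    constructor
    · rintro ⟨hY, -, -⟩
      exact Or.inl ⟨hY, hyT⟩
    · rintro (⟨hY, -⟩ | hmem)
      · exact ⟨hY, by simp [hyT], hcard hY⟩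
      · exfalso
        by_cases hc : s ∈ Y ∧ ¬ T ⊆ Y
        · rw [if_pos hc, Finset.mem_singleton] at hmem
          exact hs (hmem ▸ hyT)
        · rw [if_neg hc] at hmem
          exact absurd hmem (Finset.notMem_empty y)
  · by_cases hys : y = s
    · subst hys
      have hfil : (Y.filter fun z =>
            1 ≤ (if z ∈ T then 2 else if z = y then 1 else 0) ∧
              ((if y ∈ T then 2 else if y = y then 1 else 0) <
                  (if z ∈ T then 2 else if z = y then 1 else 0) ∨
                ((if y ∈ T then (2:ℕ) else if y = y then 1 else 0) =
                  (if z ∈ T then 2 else if z = y then 1 else 0) ∧ f y < f z)))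
          = Y ∩ T := by
        ext z
        rw [Finset.mem_filter, Finset.mem_inter]
        constructor
        · rintro ⟨hzY, hz1, hlt⟩
          refine ⟨hzY, ?_⟩
          by_cases hzT : z ∈ T
          · exact hzT
          · exfalso
            by_cases hzy : z = y
            · subst hzy
              simp [hyT, lt_self_iff_false] at hlt
            · simp [hzT, hzy] at hz1
        · rintro ⟨hzY, hzT⟩
          refine ⟨hzY, by simp [hzT], Or.inl ?_⟩
          simp [hyT, hzT]
      rw [hfil]
      have hcardiff : ((Y ∩ T).card < T.card) ↔ ¬ T ⊆ Y := by
        constructor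
        · intro h hTY
          rw [Finset.inter_eq_right.mpr hTY] at h
          exact lt_irrefl _ h
        · intro hTY
          apply Finset.card_lt_card
          rw [Finset.ssubset_def]
          exact ⟨Finset.inter_subset_right,
            fun h => hTY fun a ha => (Finset.mem_inter.mp (h ha)).1⟩
      constructor
      · rintro ⟨hY, -, hcard⟩
        right
        rw [if_pos ⟨hY, hcardiff.mp hcard⟩]
        exact Finset.mem_singleton_self y
      · rintro (⟨-, hT⟩ | hmem)
        · exact absurd hT hyT
        · by_cases hc : y ∈ Y ∧ ¬ T ⊆ Y
          · exact ⟨hc.1, by simp [hyT], hcardiff.mpr hc.2⟩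
          · rw [if_neg hc] at hmem
            exact absurd hmem (Finset.notMem_empty y)
    · constructor
      · rintro ⟨-, hacc, -⟩
        simp [hyT, hys] at hacc
      · rintro (⟨-, h⟩ | hmem)
        · exact absurd h hyT
        · by_cases hc : s ∈ Y ∧ ¬ T ⊆ Y
          · rw [if_pos hc, Finset.mem_singleton] at hmem
            exact absurd hmem hys
          · rw [if_neg hc] at hmem
            exact absurd hmem (Finset.notMem_empty y)

end PKDHelpers

section PKDMain

open Finset

variable {X : Type*}

/-- If `x ∈ E ∅` then `x ∈ E W` for every finite `W` not containing `x`. -/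
private theorem pkd_lemBP (E : Finset X → Set X)
    (hpres : ∀ C1 C2 : Finset X → Finset X, IsChoice C1 → IsChoice C2 →
      Responsive C1 → Responsive C2 → PathIndependent (lexComp E C1 C2))
    (f : X → ℕ) (hf : Function.Injective f) (x : X) (hxK : x ∈ E ∅)
    (W : Finset X) (hxW : x ∉ W) : x ∈ E W := by
  by_contra hxEW
  set C1 : Finset X → Finset X :=
    fun Y => topChoice (pkdOrd f hf fun y => if y ∈ W then 1 else 0) W.card Y with hC1d
  set C2 : Finset X → Finset X :=
    fun Y => topChoice (pkdOrd f hf fun y => if y ∈ ({x} : Finset X) then 1 else 0)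
      ({x} : Finset X).card Y with hC2d
  have hC1 : ∀ Y, C1 Y = Y ∩ W := fun Y => pkd_trace f hf W Y
  have hC2 : ∀ Y, C2 Y = Y ∩ {x} := fun Y => pkd_trace f hf {x} Y
  have hpi := hpres C1 C2 (isChoice_topChoice _ _) (isChoice_topChoice _ _)
    ⟨_, _, fun _ => rfl⟩ ⟨_, _, fun _ => rfl⟩ W {x}
  have hL : ∀ Y, lexComp E C1 C2 Y
      = (Y ∩ W) ∪ ((Y.filter fun y => y ∉ E (Y ∩ W)) ∩ {x}) := by
    intro Y
    simp only [lexComp, hC1, hC2]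
  have hLW : lexComp E C1 C2 W = W := by
    rw [hL, Finset.inter_self]
    apply Finset.union_eq_left.mpr
    intro z hz
    obtain ⟨hz1, hz2⟩ := Finset.mem_inter.mp hz
    rw [Finset.mem_singleton] at hz2
    subst hz2
    exact absurd (Finset.filter_subset _ _ hz1) hxW
  have hLx : lexComp E C1 C2 {x} = ∅ := by
    rw [hL]
    have h1 : ({x} : Finset X) ∩ W = ∅ := Finset.singleton_inter_of_notMem hxW
    rw [h1]
    have h2 : ({x} : Finset X).filter (fun y => y ∉ E (∅ : Finset X)) = ∅ := by
      ext z
      simp only [Finset.mem_filter, Finset.mem_singleton, Finset.notMem_empty, iff_false,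
        not_and]
      rintro rfl hz
      exact hz hxK
    rw [h2]
    simp
  have hLWx : lexComp E C1 C2 (W ∪ {x}) = W ∪ {x} := by
    rw [hL]
    have h1 : (W ∪ {x}) ∩ W = W := Finset.inter_eq_right.mpr Finset.subset_union_left
    rw [h1]
    have h2 : ((W ∪ {x}).filter fun y => y ∉ E W) ∩ {x} = {x} := by
      ext z
      simp only [Finset.mem_inter, Finset.mem_filter, Finset.mem_union, Finset.mem_singleton]
      constructor
      · rintro ⟨-, hz⟩
        exact hz
      · rintro rfl
        exact ⟨⟨Or.inr rfl, hxEW⟩, rfl⟩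
    rw [h2]
  rw [hLWx, hLW, hLx, Finset.union_empty, hLW] at hpi
  apply hxW
  rw [← hpi]
  exact Finset.mem_union_right _ (Finset.mem_singleton_self x)

/-- The main claim, in explicit combinatorial form. -/
private theorem pkd_main (E : Finset X → Set X)
    (hpres : ∀ C1 C2 : Finset X → Finset X, IsChoice C1 → IsChoice C2 →
      Responsive C1 → Responsive C2 → PathIndependent (lexComp E C1 C2))
    (f : X → ℕ) (hf : Function.Injective f) (x w v : X) (B : Finset X)
    (hxB : x ∉ B) (hwB : w ∉ B) (hvB : v ∉ B)
    (hxw : x ≠ w) (hxv : x ≠ v) (hvw : v ≠ w)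
    (hxK : x ∈ E ∅) (hxE : x ∉ E (insert x B)) (hwE : w ∉ E (insert x B)) : False := by
  set Z : Finset X := insert x B with hZd
  have hxZ : x ∈ Z := Finset.mem_insert_self x B
  have hBZ : B ⊆ Z := Finset.subset_insert x B
  have hwZ : w ∉ Z := by
    intro h
    rcases Finset.mem_insert.mp h with h | h
    · exact hxw h.symm
    · exact hwB h
  have hvZ : v ∉ Z := by
    intro h
    rcases Finset.mem_insert.mp h with h | h
    · exact hxv h.symm
    · exact hvB h
  set T : Finset X := insert v B with hTd
  have hxT : x ∉ T := by
    intro h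
    rcases Finset.mem_insert.mp h with h | h
    · exact hxv h
    · exact hxB h
  have hwT : w ∉ T := by
    intro h
    rcases Finset.mem_insert.mp h with h | h
    · exact hvw h.symm
    · exact hwB h
  have hvT : v ∈ T := Finset.mem_insert_self v B
  have hxET : x ∈ E T := pkd_lemBP E hpres f hf x hxK T hxT
  -- Step: w ∈ E T
  have hwET : w ∈ E T := by
    by_contra hwET
    set C1 : Finset X → Finset X :=
      fun Y => topChoice (pkdOrd f hf fun y => if y ∈ T then 2 else if y = x then 1 else 0)
        T.card Y with hC1d
    set C2 : Finset X → Finset X :=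
      fun Y => topChoice (pkdOrd f hf fun y => if y ∈ ({x} : Finset X) then 2 else
        if y = w then 1 else 0) ({x} : Finset X).card Y with hC2d
    have hC1 : ∀ Y, C1 Y = (Y ∩ T) ∪ (if x ∈ Y ∧ ¬ T ⊆ Y then {x} else ∅) :=
      fun Y => pkd_block f hf T x hxT Y
    have hC2 : ∀ Y : Finset X, C2 Y = if x ∈ Y then {x} else if w ∈ Y then {w} else ∅ := by
      intro Y
      rw [show C2 Y = (Y ∩ {x}) ∪ (if w ∈ Y ∧ ¬ ({x} : Finset X) ⊆ Y then {w} else ∅) from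
        pkd_block f hf {x} w (fun h => hxw (Finset.mem_singleton.mp h).symm) Y]
      by_cases hxY : x ∈ Y
      · rw [if_pos hxY]
        have h1 : Y ∩ {x} = {x} := by
          ext z
          simp only [Finset.mem_inter, Finset.mem_singleton]
          constructor
          · rintro ⟨-, h⟩
            exact h
          · rintro rfl
            exact ⟨hxY, rfl⟩
        have h2 : ¬ (w ∈ Y ∧ ¬ ({x} : Finset X) ⊆ Y) := by
          rintro ⟨-, h⟩
          exact h (Finset.singleton_subset_iff.mpr hxY)
        rw [h1, if_neg h2, Finset.union_empty]
      · rw [if_neg hxY]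
        have h1 : Y ∩ {x} = ∅ := by
          ext z
          simp only [Finset.mem_inter, Finset.mem_singleton, Finset.notMem_empty, iff_false,
            not_and]
          intro hz hzx
          exact hxY (hzx ▸ hz)
        have h3 : ¬ ({x} : Finset X) ⊆ Y := fun h => hxY (h (Finset.mem_singleton_self x))
        rw [h1]
        by_cases hwY : w ∈ Y
        · rw [if_pos hwY, if_pos ⟨hwY, h3⟩, Finset.empty_union]
        · rw [if_neg hwY, if_neg (by rintro ⟨h, -⟩; exact hwY h), Finset.union_empty]
    have hpi := hpres C1 C2 (isChoice_topChoice _ _) (isChoice_topChoice _ _)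
      ⟨_, _, fun _ => rfl⟩ ⟨_, _, fun _ => rfl⟩ (insert w Z) {v}
    -- L (insert w Z) = Z
    have hL1 : lexComp E C1 C2 (insert w Z) = Z := by
      have hc : C1 (insert w Z) = Z := by
        rw [hC1]
        have h1 : (insert w Z) ∩ T = B := by
          ext z
          simp only [Finset.mem_inter, Finset.mem_insert, hZd, hTd]
          constructor
          · rintro ⟨h1 | h1, h2 | h2⟩
            · subst h1
              exact absurd h2 fun h => hvw h.symm
            · subst h1
              exact absurd h2 hwB
            · subst h2
              rcases h1 with h | h
              · exact absurd h fun h' => hxv h'.symm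
              · exact absurd h hvB
            · exact h2
          · intro hz
            exact ⟨Or.inr (Or.inr hz), Or.inr hz⟩
        have h2 : x ∈ insert w Z ∧ ¬ T ⊆ insert w Z := by
          refine ⟨Finset.mem_insert_of_mem hxZ, fun h => ?_⟩
          have := h hvT
          rcases Finset.mem_insert.mp this with h' | h'
          · exact hvw h'
          · exact hvZ h'
        rw [h1, if_pos h2]
        ext z
        simp only [Finset.mem_union, Finset.mem_singleton, hZd, Finset.mem_insert]
        tauto
      rw [lexComp, hc, hC2]
      have hx1 : x ∈ (insert w Z).filter fun y => y ∉ E Z := by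
        rw [Finset.mem_filter]
        exact ⟨Finset.mem_insert_of_mem hxZ, hxE⟩
      rw [if_pos hx1]
      apply Finset.union_eq_left.mpr
      exact Finset.singleton_subset_iff.mpr hxZ
    -- L {v} = {v}
    have hL2 : lexComp E C1 C2 {v} = {v} := by
      have hc : C1 {v} = {v} := by
        rw [hC1]
        have h1 : ({v} : Finset X) ∩ T = {v} := by
          ext z
          simp only [Finset.mem_inter, Finset.mem_singleton]
          constructor
          · rintro ⟨h, -⟩
            exact h
          · rintro rfl
            exact ⟨rfl, hvT⟩
        have h2 : ¬ (x ∈ ({v} : Finset X) ∧ ¬ T ⊆ {v}) := by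
          rintro ⟨h, -⟩
          exact hxv (Finset.mem_singleton.mp h)
        rw [h1, if_neg h2, Finset.union_empty]
      rw [lexComp, hc, hC2]
      have hxp : x ∉ ({v} : Finset X).filter fun y => y ∉ E {v} := by
        intro h
        exact hxv (Finset.mem_singleton.mp (Finset.filter_subset _ _ h))
      have hwp : w ∉ ({v} : Finset X).filter fun y => y ∉ E {v} := by
        intro h
        exact hvw (Finset.mem_singleton.mp (Finset.filter_subset _ _ h)).symm
      rw [if_neg hxp, if_neg hwp, Finset.union_empty]
    -- L (insert v Z) = T
    have hL3 : lexComp E C1 C2 (insert v Z) = T := by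
      have hTsub : T ⊆ insert v Z := by
        rw [hTd]
        exact Finset.insert_subset_insert v hBZ
      have hc : C1 (insert v Z) = T := by
        rw [hC1]
        have h1 : (insert v Z) ∩ T = T := Finset.inter_eq_right.mpr hTsub
        have h2 : ¬ (x ∈ insert v Z ∧ ¬ T ⊆ insert v Z) := by
          rintro ⟨-, h⟩
          exact h hTsub
        rw [h1, if_neg h2, Finset.union_empty]
      rw [lexComp, hc, hC2]
      have hxp : x ∉ (insert v Z).filter fun y => y ∉ E T := by
        intro h
        exact (Finset.mem_filter.mp h).2 hxET
      have hwp : w ∉ (insert v Z).filter fun y => y ∉ E T := by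
        intro h
        have := Finset.filter_subset _ _ h
        rcases Finset.mem_insert.mp this with h' | h'
        · exact hvw h'.symm
        · exact hwZ h'
      rw [if_neg hxp, if_neg hwp, Finset.union_empty]
    -- L (insert w (insert v Z)) = T ∪ {w}
    have hL4 : lexComp E C1 C2 (insert w (insert v Z)) = T ∪ {w} := by
      have hTsub : T ⊆ insert w (insert v Z) := by
        intro z hz
        apply Finset.mem_insert_of_mem
        rw [hTd] at hz
        rcases Finset.mem_insert.mp hz with h | h
        · exact h ▸ Finset.mem_insert_self v Z
        · exact Finset.mem_insert_of_mem (hBZ h)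
      have hc : C1 (insert w (insert v Z)) = T := by
        rw [hC1]
        have h1 : (insert w (insert v Z)) ∩ T = T := Finset.inter_eq_right.mpr hTsub
        have h2 : ¬ (x ∈ insert w (insert v Z) ∧ ¬ T ⊆ insert w (insert v Z)) := by
          rintro ⟨-, h⟩
          exact h hTsub
        rw [h1, if_neg h2, Finset.union_empty]
      rw [lexComp, hc, hC2]
      have hxp : x ∉ (insert w (insert v Z)).filter fun y => y ∉ E T := by
        intro h
        exact (Finset.mem_filter.mp h).2 hxET
      have hwp : w ∈ (insert w (insert v Z)).filter fun y => y ∉ E T := by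
        rw [Finset.mem_filter]
        exact ⟨Finset.mem_insert_self w _, hwET⟩
      rw [if_neg hxp, if_pos hwp]
    -- assemble
    have hU : insert w Z ∪ {v} = insert w (insert v Z) := by
      ext z
      simp only [Finset.mem_union, Finset.mem_insert, Finset.mem_singleton]
      tauto
    have hI : Z ∪ {v} = insert v Z := by
      ext z
      simp only [Finset.mem_union, Finset.mem_insert, Finset.mem_singleton]
      tauto
    rw [hU, hL4, hL1, hL2, hI, hL3] at hpi
    -- hpi : T ∪ {w} = T
    apply hwT
    rw [← hpi]
    exact Finset.mem_union_right _ (Finset.mem_singleton_self w)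
  -- Final instance
  set C1 : Finset X → Finset X :=
    fun Y => topChoice (pkdOrd f hf fun y => if y ∈ Z then 2 else if y = v then 1 else 0)
      Z.card Y with hC1d
  set C2 : Finset X → Finset X :=
    fun Y => topChoice (pkdOrd f hf fun y => if y ∈ ({w} : Finset X) then 1 else 0)
      ({w} : Finset X).card Y with hC2d
  have hC1 : ∀ Y, C1 Y = (Y ∩ Z) ∪ (if v ∈ Y ∧ ¬ Z ⊆ Y then {v} else ∅) :=
    fun Y => pkd_block f hf Z v hvZ Y
  have hC2 : ∀ Y, C2 Y = Y ∩ {w} := fun Y => pkd_trace f hf {w} Y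
  have hpi := hpres C1 C2 (isChoice_topChoice _ _) (isChoice_topChoice _ _)
    ⟨_, _, fun _ => rfl⟩ ⟨_, _, fun _ => rfl⟩ {x} (insert w T)
  -- L {x} = {x}
  have hL1 : lexComp E C1 C2 {x} = {x} := by
    have hc : C1 {x} = {x} := by
      rw [hC1]
      have h1 : ({x} : Finset X) ∩ Z = {x} := by
        ext z
        simp only [Finset.mem_inter, Finset.mem_singleton]
        constructor
        · rintro ⟨h, -⟩
          exact h
        · rintro rfl
          exact ⟨rfl, hxZ⟩
      have h2 : ¬ (v ∈ ({x} : Finset X) ∧ ¬ Z ⊆ {x}) := by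
        rintro ⟨h, -⟩
        exact hxv (Finset.mem_singleton.mp h).symm
      rw [h1, if_neg h2, Finset.union_empty]
    rw [lexComp, hc, hC2]
    have h3 : (({x} : Finset X).filter fun y => y ∉ E {x}) ∩ {w} = ∅ := by
      ext z
      simp only [Finset.mem_inter, Finset.mem_singleton, Finset.notMem_empty, iff_false,
        not_and]
      intro hz hzw
      exact hxw ((Finset.mem_singleton.mp (Finset.filter_subset _ _ hz)).symm.trans hzw)
    rw [h3, Finset.union_empty]
  -- L (insert w T) = T
  have hL2 : lexComp E C1 C2 (insert w T) = T := by
    have hc : C1 (insert w T) = T := by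
      rw [hC1]
      have h1 : (insert w T) ∩ Z = B := by
        ext z
        simp only [Finset.mem_inter, Finset.mem_insert, hZd, hTd]
        constructor
        · rintro ⟨h1 | h1 | h1, h2 | h2⟩
          · subst h1
            exact absurd h2.symm hxw
          · subst h1
            exact absurd h2 hwB
          · subst h1
            exact absurd h2.symm hxv
          · subst h1
            exact absurd h2 hvB
          · exact h1
          · exact h1
        · intro hz
          exact ⟨Or.inr (Or.inr hz), Or.inr hz⟩
      have h2 : v ∈ insert w T ∧ ¬ Z ⊆ insert w T := by
        refine ⟨Finset.mem_insert_of_mem hvT, fun h => ?_⟩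
        have := h hxZ
        rcases Finset.mem_insert.mp this with h' | h'
        · exact hxw h'
        · exact hxT h'
      rw [h1, if_pos h2]
      ext z
      simp only [Finset.mem_union, Finset.mem_singleton, hTd, Finset.mem_insert]
      tauto
    rw [lexComp, hc, hC2]
    have h3 : ((insert w T).filter fun y => y ∉ E T) ∩ {w} = ∅ := by
      ext z
      simp only [Finset.mem_inter, Finset.mem_singleton, Finset.notMem_empty, iff_false,
        not_and]
      intro hz hzw
      subst hzw
      exact (Finset.mem_filter.mp hz).2 hwET
    rw [h3, Finset.union_empty]
  -- L (insert v Z) = Z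
  have hL3 : lexComp E C1 C2 (insert v Z) = Z := by
    have hZsub : Z ⊆ insert v Z := Finset.subset_insert v Z
    have hc : C1 (insert v Z) = Z := by
      rw [hC1]
      have h1 : (insert v Z) ∩ Z = Z := Finset.inter_eq_right.mpr hZsub
      have h2 : ¬ (v ∈ insert v Z ∧ ¬ Z ⊆ insert v Z) := by
        rintro ⟨-, h⟩
        exact h hZsub
      rw [h1, if_neg h2, Finset.union_empty]
    rw [lexComp, hc, hC2]
    have h3 : ((insert v Z).filter fun y => y ∉ E Z) ∩ {w} = ∅ := by
      ext z
      simp only [Finset.mem_inter, Finset.mem_singleton, Finset.notMem_empty, iff_false,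
        not_and]
      intro hz hzw
      subst hzw
      have := Finset.filter_subset _ _ hz
      rcases Finset.mem_insert.mp this with h' | h'
      · exact hvw h'.symm
      · exact hwZ h'
    rw [h3, Finset.union_empty]
  -- L (insert w (insert v Z)) = Z ∪ {w}
  have hL4 : lexComp E C1 C2 (insert w (insert v Z)) = Z ∪ {w} := by
    have hZsub : Z ⊆ insert w (insert v Z) :=
      fun z hz => Finset.mem_insert_of_mem (Finset.mem_insert_of_mem hz)
    have hc : C1 (insert w (insert v Z)) = Z := by
      rw [hC1]
      have h1 : (insert w (insert v Z)) ∩ Z = Z := Finset.inter_eq_right.mpr hZsub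
      have h2 : ¬ (v ∈ insert w (insert v Z) ∧ ¬ Z ⊆ insert w (insert v Z)) := by
        rintro ⟨-, h⟩
        exact h hZsub
      rw [h1, if_neg h2, Finset.union_empty]
    rw [lexComp, hc, hC2]
    have h3 : ((insert w (insert v Z)).filter fun y => y ∉ E Z) ∩ {w} = {w} := by
      ext z
      simp only [Finset.mem_inter, Finset.mem_singleton]
      constructor
      · rintro ⟨-, h⟩
        exact h
      · rintro rfl
        exact ⟨Finset.mem_filter.mpr ⟨Finset.mem_insert_self _ _, hwE⟩, rfl⟩
    rw [h3]
  -- assemble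
  have hU : ({x} : Finset X) ∪ insert w T = insert w (insert v Z) := by
    ext z
    simp only [Finset.mem_union, Finset.mem_insert, Finset.mem_singleton, hZd, hTd]
    tauto
  have hI : ({x} : Finset X) ∪ T = insert v Z := by
    ext z
    simp only [Finset.mem_union, Finset.mem_insert, Finset.mem_singleton, hZd, hTd]
    tauto
  rw [hU, hL4, hL1, hL2, hI, hL3] at hpi
  -- hpi : Z ∪ {w} = Z
  apply hwZ
  rw [← hpi]
  exact Finset.mem_union_right _ (Finset.mem_singleton_self w)

end PKDMain


/-- **Claim (K-disjointness).** If `L_E` preserves path independence over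
responsive choice functions, then `R_E` is `K`-disjoint on `Dom(R_E)`:
for every finite `Z` with `G_E(Z) = E(Z) ∪ Z ≠ X`, `(Z \ E(Z)) ∩ E(∅) = ∅`. -/
theorem preserving_pi_K_disjoint
    {X : Type*} [Countable X] [Infinite X] (E : Finset X → Set X)
    (hpres : ∀ C1 C2 : Finset X → Finset X, IsChoice C1 → IsChoice C2 →
      Responsive C1 → Responsive C2 → PathIndependent (lexComp E C1 C2)) :
    ∀ Z : Finset X, E Z ∪ (Z : Set X) ≠ Set.univ →
      ((Z : Set X) \ E Z) ∩ E ∅ = ∅ := by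
  intro Z hZdom
  by_contra hne
  obtain ⟨x, hx⟩ := Set.nonempty_iff_ne_empty.mpr hne
  obtain ⟨⟨hxZc, hxE⟩, hxK⟩ := hx
  have hxZ : x ∈ Z := hxZc
  obtain ⟨w, hw⟩ := (Set.ne_univ_iff_exists_notMem _).mp hZdom
  have hwE : w ∉ E Z := fun h => hw (Set.mem_union_left _ h)
  have hwZ : w ∉ Z := fun h => hw (Set.mem_union_right _ (Finset.mem_coe.mpr h))
  obtain ⟨v, hv⟩ := Infinite.exists_notMem_finset (insert w Z)
  have hvZ : v ∉ Z := fun h => hv (Finset.mem_insert_of_mem h)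
  have hvw : v ≠ w := fun h => hv (h ▸ Finset.mem_insert_self w Z)
  obtain ⟨f, hf⟩ := Countable.exists_injective_nat X
  have hZB : insert x (Z.erase x) = Z := Finset.insert_erase hxZ
  refine pkd_main E hpres f hf x w v (Z.erase x) (Finset.notMem_erase x Z)
    (fun h => hwZ (Finset.mem_of_mem_erase h)) (fun h => hvZ (Finset.mem_of_mem_erase h))
    (fun h => hwZ (h ▸ hxZ)) (fun h => hvZ (h ▸ hxZ)) hvw hxK ?_ ?_
  · rw [hZB]
    exact hxE
  · rw [hZB]
    exact hwE
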